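/- Let Γ = {A ∈ M₃(R) : A₁₂, A₁₃ ∈ m} be the hereditary overorder of the Gelfand order, acting on the column space R³, and set P̃_⋆ = R³ and P̃_⋄ = m⊕R⊕R (a Γ-submodule of R³). Then every nonzero Γ-submodule of R³ equals tⁿ·P̃_⋆ or tⁿ·P̃_⋄ for some n ∈ ℕ. In particular the Γ-submodules of P̃_⋆ are totally ordered by inclusion (P̃_⋆ is uniserial, and likewise P̃_⋄), and every nonzero Γ-submodule of R³ is isomorphic to P̃_⋆ or P̃_⋄, hence projective. -/

import Mathlib

set_option maxHeartbeats 1600000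
set_option synthInstance.maxHeartbeats 400000

noncomputable section

variable (k : Type) [Field k]

/-- The maximal ideal `m = (t)` of `R = k⟦t⟧`. -/
def mIdeal : Ideal (PowerSeries k) :=
  Ideal.span {PowerSeries.X}

lemma X_mem_mIdeal : (PowerSeries.X : PowerSeries k) ∈ mIdeal k :=
  Ideal.subset_span rfl

/-- The Gelfand order `Λ ⊆ M₃(k⟦t⟧)`: all matrices `A` with
`A₁₂, A₁₃, A₂₃, A₃₂ ∈ m`. -/
def gelfandOrder : Subalgebra k (Matrix (Fin 3) (Fin 3) (PowerSeries k)) where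
  carrier := {A | A 0 1 ∈ mIdeal k ∧ A 0 2 ∈ mIdeal k ∧ A 1 2 ∈ mIdeal k ∧ A 2 1 ∈ mIdeal k}
  zero_mem' := ⟨zero_mem _, zero_mem _, zero_mem _, zero_mem _⟩
  one_mem' := by
    refine ⟨?_, ?_, ?_, ?_⟩ <;>
    · rw [Matrix.one_apply_ne (by decide)]
      exact zero_mem _
  add_mem' := by
    rintro a b ⟨ha1, ha2, ha3, ha4⟩ ⟨hb1, hb2, hb3, hb4⟩
    exact ⟨add_mem ha1 hb1, add_mem ha2 hb2, add_mem ha3 hb3, add_mem ha4 hb4⟩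
  mul_mem' := by
    rintro a b ⟨ha1, ha2, ha3, ha4⟩ ⟨hb1, hb2, hb3, hb4⟩
    refine ⟨?_, ?_, ?_, ?_⟩ <;>
      simp only [Set.mem_setOf_eq, Matrix.mul_apply, Fin.sum_univ_three]
    · exact add_mem (add_mem (Ideal.mul_mem_left _ _ hb1) (Ideal.mul_mem_right _ _ ha1))
        (Ideal.mul_mem_left _ _ hb4)
    · exact add_mem (add_mem (Ideal.mul_mem_left _ _ hb2) (Ideal.mul_mem_left _ _ hb3))
        (Ideal.mul_mem_right _ _ ha2)
    · exact add_mem (add_mem (Ideal.mul_mem_left _ _ hb2) (Ideal.mul_mem_left _ _ hb3))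
        (Ideal.mul_mem_right _ _ ha3)
    · exact add_mem (add_mem (Ideal.mul_mem_left _ _ hb1) (Ideal.mul_mem_right _ _ ha4))
        (Ideal.mul_mem_left _ _ hb4)
  algebraMap_mem' := by
    intro r
    refine ⟨?_, ?_, ?_, ?_⟩ <;>
    · rw [Matrix.algebraMap_matrix_apply, if_neg (by decide)]
      exact zero_mem _

/-- The column space `R³` is a module over the matrix ring `M₃(k⟦t⟧)` via
matrix-vector multiplication; by restriction of scalars it becomes a left module over
every subalgebra of `M₃(k⟦t⟧)`, in particular over the Gelfand order. -/
instance : Module (Matrix (Fin 3) (Fin 3) (PowerSeries k)) (Fin 3 → PowerSeries k) where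
  smul A v := A.mulVec v
  one_smul v := Matrix.one_mulVec v
  mul_smul A B v := (Matrix.mulVec_mulVec v A B).symm
  smul_zero A := Matrix.mulVec_zero A
  smul_add A u v := Matrix.mulVec_add A u v
  add_smul A B v := Matrix.add_mulVec A B v
  zero_smul v := Matrix.zero_mulVec v

instance : IsScalarTower k (Matrix (Fin 3) (Fin 3) (PowerSeries k)) (Fin 3 → PowerSeries k) :=
  ⟨fun c M v => Matrix.smul_mulVec c M v⟩

instance : SMulCommClass (Matrix (Fin 3) (Fin 3) (PowerSeries k)) k (Fin 3 → PowerSeries k) :=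
  ⟨fun M c v => Matrix.mulVec_smul M c v⟩

instance : SMulCommClass k (Matrix (Fin 3) (Fin 3) (PowerSeries k)) (Fin 3 → PowerSeries k) :=
  SMulCommClass.symm _ _ _

instance (S : Subalgebra k (Matrix (Fin 3) (Fin 3) (PowerSeries k))) :
    IsScalarTower k (↥S) (Fin 3 → PowerSeries k) :=
  ⟨fun c A v => by
    show ((c • A : ↥S) : Matrix (Fin 3) (Fin 3) (PowerSeries k)) • v
        = c • ((A : Matrix (Fin 3) (Fin 3) (PowerSeries k)) • v)
    rw [Subalgebra.coe_smul]
    exact smul_assoc c (A : Matrix (Fin 3) (Fin 3) (PowerSeries k)) v⟩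

instance (S : Subalgebra k (Matrix (Fin 3) (Fin 3) (PowerSeries k))) :
    SMulCommClass (↥S) k (Fin 3 → PowerSeries k) :=
  ⟨fun A c v => by
    show (A : Matrix (Fin 3) (Fin 3) (PowerSeries k)) • (c • v)
        = c • ((A : Matrix (Fin 3) (Fin 3) (PowerSeries k)) • v)
    exact smul_comm _ c v⟩

instance (S : Subalgebra k (Matrix (Fin 3) (Fin 3) (PowerSeries k))) :
    SMulCommClass k (↥S) (Fin 3 → PowerSeries k) :=
  SMulCommClass.symm _ _ _

lemma subalg_smul_apply (S : Subalgebra k (Matrix (Fin 3) (Fin 3) (PowerSeries k)))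
    (A : ↥S) (v : Fin 3 → PowerSeries k) (i : Fin 3) :
    (A • v) i = (A : Matrix (Fin 3) (Fin 3) (PowerSeries k)) i 0 * v 0
      + (A : Matrix (Fin 3) (Fin 3) (PowerSeries k)) i 1 * v 1
      + (A : Matrix (Fin 3) (Fin 3) (PowerSeries k)) i 2 * v 2 := by
  show ((A : Matrix (Fin 3) (Fin 3) (PowerSeries k)).mulVec v) i = _
  simp [Matrix.mulVec, dotProduct, Fin.sum_univ_three]

lemma subalg_smul_comm_X (S : Subalgebra k (Matrix (Fin 3) (Fin 3) (PowerSeries k)))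
    (A : ↥S) (x : PowerSeries k) (v : Fin 3 → PowerSeries k) :
    A • (x • v) = x • (A • v) := by
  show (A : Matrix (Fin 3) (Fin 3) (PowerSeries k)) • (x • v)
      = x • ((A : Matrix (Fin 3) (Fin 3) (PowerSeries k)) • v)
  exact Matrix.mulVec_smul _ x v

/-- The hereditary overorder `Γ` of the Gelfand order: all matrices `A ∈ M₃(k⟦t⟧)`
with `A₁₂, A₁₃ ∈ m`. -/
def heredOrder : Subalgebra k (Matrix (Fin 3) (Fin 3) (PowerSeries k)) where
  carrier := {A | A 0 1 ∈ mIdeal k ∧ A 0 2 ∈ mIdeal k}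
  zero_mem' := ⟨zero_mem _, zero_mem _⟩
  one_mem' := by
    refine ⟨?_, ?_⟩ <;>
    · rw [Matrix.one_apply_ne (by decide)]
      exact zero_mem _
  add_mem' := by
    rintro a b ⟨ha1, ha2⟩ ⟨hb1, hb2⟩
    exact ⟨add_mem ha1 hb1, add_mem ha2 hb2⟩
  mul_mem' := by
    rintro a b ⟨ha1, ha2⟩ ⟨hb1, hb2⟩
    refine ⟨?_, ?_⟩ <;>
      simp only [Set.mem_setOf_eq, Matrix.mul_apply, Fin.sum_univ_three]
    · exact add_mem (add_mem (Ideal.mul_mem_left _ _ hb1) (Ideal.mul_mem_right _ _ ha1))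
        (Ideal.mul_mem_right _ _ ha2)
    · exact add_mem (add_mem (Ideal.mul_mem_left _ _ hb2) (Ideal.mul_mem_right _ _ ha1))
        (Ideal.mul_mem_right _ _ ha2)
  algebraMap_mem' := by
    intro r
    refine ⟨?_, ?_⟩ <;>
    · rw [Matrix.algebraMap_matrix_apply, if_neg (by decide)]
      exact zero_mem _

/-- `P̃_⋆ = R³`, the full column space, and `P̃_⋄ = m ⊕ R ⊕ R`, a `Γ`-submodule of `R³`. -/
def Pdiamond : Submodule (↥(heredOrder k)) (Fin 3 → PowerSeries k) where
  carrier := {v | v 0 ∈ mIdeal k}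
  zero_mem' := show (0 : PowerSeries k) ∈ mIdeal k from zero_mem _
  add_mem' := fun {a b} ha hb => by
    have ha' : a 0 ∈ mIdeal k := ha
    have hb' : b 0 ∈ mIdeal k := hb
    exact add_mem ha' hb'
  smul_mem' := by
    rintro ⟨A, hA1, hA2⟩ v h0
    rw [Set.mem_setOf_eq, subalg_smul_apply]
    exact add_mem (add_mem (Ideal.mul_mem_left _ _ h0) (Ideal.mul_mem_right _ _ hA1))
      (Ideal.mul_mem_right _ _ hA2)

/-- Multiplication by `t` as a `Γ`-linear endomorphism of `R³`. -/
def multX : Module.End (↥(heredOrder k)) (Fin 3 → PowerSeries k) where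
  toFun v := (PowerSeries.X : PowerSeries k) • v
  map_add' u v := smul_add _ u v
  map_smul' A v := by
    simp only [RingHom.id_apply]
    exact (subalg_smul_comm_X k _ A _ v).symm

/-! ### Auxiliary lemmas -/

section Aux

open PowerSeries

local notation "R" => PowerSeries k
local notation "V" => (Fin 3 → PowerSeries k)

lemma mem_mIdeal_iff {f : PowerSeries k} : f ∈ mIdeal k ↔ (PowerSeries.X : PowerSeries k) ∣ f :=
  Ideal.mem_span_singleton

lemma mem_hered {A : Matrix (Fin 3) (Fin 3) (PowerSeries k)} :
    A ∈ heredOrder k ↔ A 0 1 ∈ mIdeal k ∧ A 0 2 ∈ mIdeal k := Iff.rfl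

lemma mem_Pdiamond {v : V} : v ∈ Pdiamond k ↔ v 0 ∈ mIdeal k := Iff.rfl

lemma smul_std (c : PowerSeries k) (l i : Fin 3) (h : Matrix.single l i c ∈ heredOrder k)
    (v : V) :
    (⟨Matrix.single l i c, h⟩ : ↥(heredOrder k)) • v = fun p => if p = l then c * v i else 0 := by
  funext p
  rw [subalg_smul_apply]
  by_cases hp : p = l
  · subst hp
    fin_cases i <;>
      simp [Matrix.single, Matrix.of_apply, Fin.ext_iff]
  · have h0 : l ≠ p := fun h => hp h.symm
    simp [Matrix.single, Matrix.of_apply, h0, hp]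

/-- The chain of submodules: `MM (2n) = tⁿ·P⋆`, `MM (2n+1) = tⁿ·P⋄`. -/
def MM (j : ℕ) : Submodule (↥(heredOrder k)) V where
  carrier := {v | (X : R) ^ ((j+1)/2) ∣ v 0 ∧ (X : R) ^ (j/2) ∣ v 1 ∧ (X : R) ^ (j/2) ∣ v 2}
  zero_mem' := ⟨dvd_zero _, dvd_zero _, dvd_zero _⟩
  add_mem' := fun ha hb => ⟨dvd_add ha.1 hb.1, dvd_add ha.2.1 hb.2.1, dvd_add ha.2.2 hb.2.2⟩
  smul_mem' := by
    rintro ⟨A, hA1, hA2⟩ v ⟨h0, h1, h2⟩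
    have key : ∀ g : R, g ∈ mIdeal k → ∀ w : R, (X : R)^(j/2) ∣ w → (X : R)^((j+1)/2) ∣ g * w := by
      intro g hg w hw
      have : (X : R)^(j/2+1) ∣ g * w := by
        rw [pow_succ, mul_comm ((X:R)^(j/2)) X]
        exact mul_dvd_mul ((mem_mIdeal_iff k).mp hg) hw
      exact dvd_trans (pow_dvd_pow _ (by omega)) this
    refine ⟨?_, ?_, ?_⟩ <;> rw [subalg_smul_apply]
    · exact dvd_add (dvd_add (Dvd.dvd.mul_left h0 _) (key _ hA1 _ h1)) (key _ hA2 _ h2)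
    · exact dvd_add (dvd_add (Dvd.dvd.mul_left (dvd_trans (pow_dvd_pow _ (by omega)) h0) _)
        (Dvd.dvd.mul_left h1 _)) (Dvd.dvd.mul_left h2 _)
    · exact dvd_add (dvd_add (Dvd.dvd.mul_left (dvd_trans (pow_dvd_pow _ (by omega)) h0) _)
        (Dvd.dvd.mul_left h1 _)) (Dvd.dvd.mul_left h2 _)

lemma mem_MM {j : ℕ} {v : V} :
    v ∈ MM k j ↔ (X : R) ^ ((j+1)/2) ∣ v 0 ∧ (X : R) ^ (j/2) ∣ v 1 ∧ (X : R) ^ (j/2) ∣ v 2 :=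
  Iff.rfl

lemma MM_anti {i j : ℕ} (h : i ≤ j) : MM k j ≤ MM k i := by
  rintro v ⟨h0, h1, h2⟩
  exact ⟨dvd_trans (pow_dvd_pow _ (by omega)) h0,
    dvd_trans (pow_dvd_pow _ (by omega)) h1, dvd_trans (pow_dvd_pow _ (by omega)) h2⟩

lemma multX_pow_apply (n : ℕ) (v : V) :
    ((multX k) ^ n) v = ((X : R) ^ n) • v := by
  induction n with
  | zero => simp
  | succ n ih =>
    rw [pow_succ', Module.End.mul_apply, ih]
    show (X : R) • ((X:R)^n • v) = _
    rw [smul_smul, pow_succ, mul_comm]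

lemma MM_even (n : ℕ) : MM k (2*n) = Submodule.map ((multX k) ^ n) ⊤ := by
  ext v
  rw [mem_MM]
  have h1 : (2*n+1)/2 = n := by omega
  have h2 : (2*n)/2 = n := by omega
  rw [h1, h2]
  constructor
  · rintro ⟨⟨w0, hw0⟩, ⟨w1, hw1⟩, ⟨w2, hw2⟩⟩
    refine ⟨![w0, w1, w2], trivial, ?_⟩
    rw [multX_pow_apply]
    funext p
    fin_cases p <;> simp [hw0, hw1, hw2, Pi.smul_apply, smul_eq_mul]
  · rintro ⟨w, -, rfl⟩
    rw [multX_pow_apply]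
    exact ⟨⟨w 0, rfl⟩, ⟨w 1, rfl⟩, ⟨w 2, rfl⟩⟩

lemma MM_odd (n : ℕ) : MM k (2*n+1) = Submodule.map ((multX k) ^ n) (Pdiamond k) := by
  ext v
  rw [mem_MM]
  have h1 : (2*n+1+1)/2 = n+1 := by omega
  have h2 : (2*n+1)/2 = n := by omega
  rw [h1, h2]
  constructor
  · rintro ⟨⟨w0, hw0⟩, ⟨w1, hw1⟩, ⟨w2, hw2⟩⟩
    refine ⟨![X * w0, w1, w2], (mem_mIdeal_iff k).mpr ⟨w0, by simp⟩, ?_⟩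
    rw [multX_pow_apply]
    funext p
    fin_cases p <;> simp [hw0, hw1, hw2, pow_succ] <;> try ring
  · rintro ⟨w, hw, rfl⟩
    rw [multX_pow_apply]
    obtain ⟨s, hs⟩ := (mem_mIdeal_iff k).mp hw
    refine ⟨⟨s, ?_⟩, ⟨w 1, rfl⟩, ⟨w 2, rfl⟩⟩
    show (X:R)^n * w 0 = _
    rw [hs, pow_succ]; ring

lemma mem_MM_even {n : ℕ} {v : V} :
    v ∈ MM k (2*n) ↔ (X:R)^n ∣ v 0 ∧ (X:R)^n ∣ v 1 ∧ (X:R)^n ∣ v 2 := by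
  have h1 : (2*n+1)/2 = n := by omega
  have h2 : (2*n)/2 = n := by omega
  rw [mem_MM, h1, h2]

lemma mem_MM_odd {n : ℕ} {v : V} :
    v ∈ MM k (2*n+1) ↔ (X:R)^(n+1) ∣ v 0 ∧ (X:R)^n ∣ v 1 ∧ (X:R)^n ∣ v 2 := by
  have h1 : (2*n+1+1)/2 = n+1 := by omega
  have h2 : (2*n+1)/2 = n := by omega
  rw [mem_MM, h1, h2]

lemma X_pow_unit_aux {f : PowerSeries k} {n : ℕ} (hd : (X:R)^n ∣ f)
    (hnd : ¬ (X:R)^(n+1) ∣ f) : ∃ u : (PowerSeries k)ˣ, f = (X:R)^n * ↑u := by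
  obtain ⟨w, hw⟩ := hd
  have hXw : ¬ (X:R) ∣ w := by
    rintro ⟨s, hs⟩
    exact hnd ⟨s, by rw [hw, hs, pow_succ]; ring⟩
  have hc : PowerSeries.constantCoeff w ≠ 0 := fun h => hXw (PowerSeries.X_dvd_iff.mpr h)
  have : IsUnit w := PowerSeries.isUnit_iff_constantCoeff.mpr (isUnit_iff_ne_zero.mpr hc)
  obtain ⟨u, hu⟩ := this
  exact ⟨u, by rw [hw, hu]⟩

lemma std_mem_col0 (l : Fin 3) (c : PowerSeries k) :
    Matrix.single l 0 c ∈ heredOrder k := by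
  refine ⟨?_, ?_⟩ <;>
    · simp only [Matrix.single, Matrix.of_apply]
      split_ifs with h
      · exact absurd h.2 (by decide)
      · exact zero_mem _

lemma std_mem_rowne (l i : Fin 3) (hl : l ≠ 0) (c : PowerSeries k) :
    Matrix.single l i c ∈ heredOrder k := by
  refine ⟨?_, ?_⟩ <;>
    · simp only [Matrix.single, Matrix.of_apply]
      split_ifs with h
      · exact absurd h.1 hl
      · exact zero_mem _

lemma std_mem_mul_X (l i : Fin 3) (c : PowerSeries k) :
    Matrix.single l i ((X:R) * c) ∈ heredOrder k := by
  refine ⟨?_, ?_⟩ <;>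
    · simp only [Matrix.single, Matrix.of_apply]
      split_ifs with h
      · exact (mem_mIdeal_iff k).mpr ⟨c, rfl⟩
      · exact zero_mem _

lemma smul_single_mem (N : Submodule (↥(heredOrder k)) V) {v : V} (hvN : v ∈ N)
    (l i : Fin 3) (c : PowerSeries k) (h : Matrix.single l i c ∈ heredOrder k) :
    (fun p => if p = l then c * v i else 0) ∈ N := by
  have h' := N.smul_mem (⟨Matrix.single l i c, h⟩ : ↥(heredOrder k)) hvN
  rwa [smul_std] at h'

lemma unit_cancel (u : (PowerSeries k)ˣ) (c w : PowerSeries k) (n : ℕ)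
    (hw : w = (X:R)^n * ↑u) : c * ↑u⁻¹ * w = (X:R)^n * c := by
  rw [hw]
  calc c * ↑u⁻¹ * ((X:R)^n * ↑u) = (X:R)^n * c * (↑u⁻¹ * ↑u : PowerSeries k) := by ring
    _ = (X:R)^n * c := by rw [Units.inv_mul, mul_one]

lemma gen_even (N : Submodule (↥(heredOrder k)) V) (n : ℕ) (v : V) (hvN : v ∈ N)
    (hv1 : v ∈ MM k (2*n)) (hv2 : v ∉ MM k (2*n+1)) : MM k (2*n) ≤ N := by
  obtain ⟨h0, h1, h2⟩ := (mem_MM_even k).mp hv1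
  have hnd : ¬ (X:R)^(n+1) ∣ v 0 := fun h => hv2 ((mem_MM_odd k).mpr ⟨h, h1, h2⟩)
  obtain ⟨u, hu⟩ := X_pow_unit_aux k h0 hnd
  intro z hz
  obtain ⟨⟨z0, hz0⟩, ⟨z1, hz1⟩, ⟨z2, hz2⟩⟩ := (mem_MM_even k).mp hz
  have key : ∀ (l : Fin 3) (c : PowerSeries k),
      (fun p => if p = l then (X:R)^n * c else 0) ∈ N := by
    intro l c
    have h' := smul_single_mem k N hvN l 0 (c * ↑u⁻¹) (std_mem_col0 k l _)
    have hc : c * ↑u⁻¹ * v 0 = (X:R)^n * c := unit_cancel k u c (v 0) n hu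
    simpa only [hc] using h'
  have hsum := N.add_mem (N.add_mem (key 0 z0) (key 1 z1)) (key 2 z2)
  have hz' : z = (fun p => if p = 0 then (X:R)^n * z0 else 0)
      + (fun p => if p = 1 then (X:R)^n * z1 else 0)
      + (fun p => if p = 2 then (X:R)^n * z2 else 0) := by
    funext p
    fin_cases p <;> simp [hz0, hz1, hz2]
  rw [hz']
  exact hsum

lemma unit_cancel' (u : (PowerSeries k)ˣ) (c w : PowerSeries k) (n : ℕ)
    (hw : w = (X:R)^n * ↑u) : (X:R) * (c * ↑u⁻¹) * w = (X:R)^(n+1) * c := by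
  rw [hw]
  calc (X:R) * (c * ↑u⁻¹) * ((X:R)^n * ↑u)
      = (X:R)^n * (X:R) * c * ((↑u⁻¹ * ↑u : PowerSeries k)) := by ring
    _ = (X:R)^(n+1) * c := by rw [Units.inv_mul, mul_one, pow_succ]

lemma smul_single_mem' (N : Submodule (↥(heredOrder k)) V) {v : V} (hvN : v ∈ N)
    (l i : Fin 3) (c : PowerSeries k) (h : Matrix.single l i c ∈ heredOrder k)
    (b : PowerSeries k) (hb : c * v i = b) :
    (fun p => if p = l then b else 0) ∈ N := by
  have h' := N.smul_mem (⟨Matrix.single l i c, h⟩ : ↥(heredOrder k)) hvN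
  rw [smul_std] at h'
  simpa only [hb] using h'

lemma gen_odd (N : Submodule (↥(heredOrder k)) V) (n : ℕ) (v : V) (hvN : v ∈ N)
    (hv1 : v ∈ MM k (2*n+1)) (hv2 : v ∉ MM k (2*n+2)) : MM k (2*n+1) ≤ N := by
  obtain ⟨h0, h1, h2⟩ := (mem_MM_odd k).mp hv1
  rw [show 2*n+2 = 2*(n+1) from by ring] at hv2
  have hex : ∃ i : Fin 3, (i = 1 ∨ i = 2) ∧ ¬ (X:R)^(n+1) ∣ v i := by
    by_cases hd1 : (X:R)^(n+1) ∣ v 1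
    · exact ⟨2, Or.inr rfl, fun h => hv2 ((mem_MM_even k).mpr ⟨h0, hd1, h⟩)⟩
    · exact ⟨1, Or.inl rfl, hd1⟩
  obtain ⟨i, hi12, hnd⟩ := hex
  have hdvd : (X:R)^n ∣ v i := by
    rcases hi12 with rfl | rfl
    exacts [h1, h2]
  obtain ⟨u, hu⟩ := X_pow_unit_aux k hdvd hnd
  intro z hz
  obtain ⟨⟨z0, hz0⟩, ⟨z1, hz1⟩, ⟨z2, hz2⟩⟩ := (mem_MM_odd k).mp hz
  have hm := std_mem_mul_X k 0 i (z0 * (↑u⁻¹ : PowerSeries k))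
  have hb := unit_cancel' k u z0 (v i) n hu
  have key0 := smul_single_mem' k N hvN 0 i _ hm _ hb
  have key : ∀ (l : Fin 3), l ≠ 0 → ∀ c : PowerSeries k,
      (fun p => if p = l then (X:R)^n * c else 0) ∈ N := by
    intro l hl c
    have h' := smul_single_mem k N hvN l i (c * ↑u⁻¹) (std_mem_rowne k l i hl _)
    have hc : c * ↑u⁻¹ * v i = (X:R)^n * c := unit_cancel k u c (v i) n hu
    simpa only [hc] using h'
  have hsum := N.add_mem (N.add_mem key0 (key 1 (by decide) z1)) (key 2 (by decide) z2)
  have hz' : z = (fun p => if p = 0 then (X:R)^(n+1) * z0 else 0)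
      + (fun p => if p = 1 then (X:R)^n * z1 else 0)
      + (fun p => if p = 2 then (X:R)^n * z2 else 0) := by
    funext p
    fin_cases p <;> simp [hz0, hz1, hz2]
  rw [hz']
  exact hsum

lemma exists_eq_MM (N : Submodule (↥(heredOrder k)) V) (hN : N ≠ ⊥) : ∃ j, N = MM k j := by
  classical
  have hS : ∃ j, ¬ N ≤ MM k j := by
    obtain ⟨v, hvN, hv0⟩ := Submodule.ne_bot_iff N |>.mp hN
    obtain ⟨i, hi⟩ := Function.ne_iff.mp hv0
    obtain ⟨m, hm⟩ : ∃ m, PowerSeries.coeff m (v i) ≠ 0 := by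
      by_contra h
      push_neg at h
      exact hi (PowerSeries.ext h)
    refine ⟨2*(m+1), fun hle => ?_⟩
    have hv : v ∈ MM k (2*(m+1)) := hle hvN
    obtain ⟨d0, d1, d2⟩ := (mem_MM_even k).mp hv
    have : (X:R)^(m+1) ∣ v i := by
      fin_cases i
      exacts [d0, d1, d2]
    exact hm (PowerSeries.X_pow_dvd_iff.mp this m (by omega))
  set j0 := Nat.find hS with hj0def
  have hj0 : ¬ N ≤ MM k j0 := Nat.find_spec hS
  have h0 : j0 ≠ 0 := by
    intro h
    apply hj0
    rw [h]
    intro z hz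
    rw [mem_MM]
    norm_num
  obtain ⟨j, hj⟩ : ∃ j, j0 = j + 1 := ⟨j0 - 1, by omega⟩
  have hle : N ≤ MM k j := of_not_not (Nat.find_min hS (show j < j0 from by omega))
  rw [hj] at hj0
  obtain ⟨v, hvN, hvnot⟩ := SetLike.not_le_iff_exists.mp hj0
  have hvmem : v ∈ MM k j := hle hvN
  refine ⟨j, le_antisymm hle ?_⟩
  rcases Nat.even_or_odd j with ⟨n, hn⟩ | ⟨n, hn⟩
  · have hj2 : j = 2*n := by omega
    subst hj2
    exact gen_even k N n v hvN hvmem hvnot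
  · subst hn
    exact gen_odd k N n v hvN hvmem (by rwa [show 2*n+2 = 2*n+1+1 from rfl])

lemma multX_injective : Function.Injective (multX k) := by
  intro a b h
  funext p
  have hp : (X : R) * a p = (X : R) * b p := congrFun h p
  exact mul_left_cancel₀ PowerSeries.X_ne_zero hp

lemma multX_pow_injective (n : ℕ) :
    Function.Injective ((multX k) ^ n : Module.End (↥(heredOrder k)) V) := by
  intro a b h
  rw [Module.End.pow_apply, Module.End.pow_apply] at h
  exact Function.Injective.iterate (multX_injective k) n h

/-- Embedding of the column space as first-column matrices in `Γ`. -/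
def iStar : V →ₗ[↥(heredOrder k)] ↥(heredOrder k) where
  toFun v := ⟨fun p q => if q = 0 then v p else 0,
    ⟨by show (if (1 : Fin 3) = 0 then v 0 else 0) ∈ mIdeal k
        rw [if_neg (by decide)]; exact zero_mem _,
     by show (if (2 : Fin 3) = 0 then v 0 else 0) ∈ mIdeal k
        rw [if_neg (by decide)]; exact zero_mem _⟩⟩
  map_add' a b := by
    apply Subtype.ext
    funext p q
    show (if q = 0 then (a + b) p else 0)
        = (fun p q => if q = 0 then a p else 0) p q + (fun p q => if q = 0 then b p else 0) p q
    by_cases h : q = 0 <;> simp [h]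
  map_smul' A v := by
    apply Subtype.ext
    show (fun p q => if q = 0 then (A • v) p else 0)
        = (A : Matrix (Fin 3) (Fin 3) (PowerSeries k))
          * Matrix.of (fun p q => if q = 0 then v p else 0)
    funext p q
    rw [Matrix.mul_apply, Fin.sum_univ_three]
    simp only [Matrix.of_apply]
    by_cases h : q = 0
    · rw [if_pos h, subalg_smul_apply, if_pos h, if_pos h, if_pos h]
    · rw [if_neg h, if_neg h, if_neg h, if_neg h]
      ring

def sStar : ↥(heredOrder k) →ₗ[↥(heredOrder k)] V where
  toFun A := fun p => (A : Matrix (Fin 3) (Fin 3) (PowerSeries k)) p 0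
  map_add' a b := rfl
  map_smul' A B := by
    funext p
    show ((A : Matrix (Fin 3) (Fin 3) (PowerSeries k))
        * (B : Matrix (Fin 3) (Fin 3) (PowerSeries k))) p 0 = _
    rw [Matrix.mul_apply, Fin.sum_univ_three, subalg_smul_apply]
    rfl

lemma proj_star : Module.Projective (↥(heredOrder k)) V := by
  apply Module.Projective.of_split (iStar k) (sStar k)
  apply LinearMap.ext
  intro v
  funext p
  show (if (0 : Fin 3) = 0 then v p else 0) = v p
  rw [if_pos rfl]

/-- Embedding of `P̃_⋄` as second-column matrices in `Γ`. -/
def iDia : ↥(Pdiamond k) →ₗ[↥(heredOrder k)] ↥(heredOrder k) where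
  toFun v := ⟨fun p q => if q = 1 then (v : V) p else 0,
    ⟨by show (if (1 : Fin 3) = 1 then (v : V) 0 else 0) ∈ mIdeal k
        rw [if_pos rfl]; exact v.2,
     by show (if (2 : Fin 3) = 1 then (v : V) 0 else 0) ∈ mIdeal k
        rw [if_neg (by decide)]; exact zero_mem _⟩⟩
  map_add' a b := by
    apply Subtype.ext
    funext p q
    show (if q = 1 then ((a : V) + (b : V)) p else 0)
        = (fun p q => if q = 1 then (a : V) p else 0) p q
          + (fun p q => if q = 1 then (b : V) p else 0) p q
    by_cases h : q = 1 <;> simp [h]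
  map_smul' A v := by
    apply Subtype.ext
    show (fun p q => if q = 1 then (A • (v : V)) p else 0)
        = (A : Matrix (Fin 3) (Fin 3) (PowerSeries k))
          * Matrix.of (fun p q => if q = 1 then (v : V) p else 0)
    funext p q
    rw [Matrix.mul_apply, Fin.sum_univ_three]
    simp only [Matrix.of_apply]
    by_cases h : q = 1
    · rw [if_pos h, subalg_smul_apply, if_pos h, if_pos h, if_pos h]
    · rw [if_neg h, if_neg h, if_neg h, if_neg h]
      ring

def sDia : ↥(heredOrder k) →ₗ[↥(heredOrder k)] ↥(Pdiamond k) where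
  toFun A := ⟨fun p => (A : Matrix (Fin 3) (Fin 3) (PowerSeries k)) p 1, A.2.1⟩
  map_add' a b := rfl
  map_smul' A B := by
    apply Subtype.ext
    funext p
    show ((A : Matrix (Fin 3) (Fin 3) (PowerSeries k))
        * (B : Matrix (Fin 3) (Fin 3) (PowerSeries k))) p 1
      = (A • ((fun p => (B : Matrix (Fin 3) (Fin 3) (PowerSeries k)) p 1) : V)) p
    rw [Matrix.mul_apply, Fin.sum_univ_three, subalg_smul_apply]

lemma proj_dia : Module.Projective (↥(heredOrder k)) (↥(Pdiamond k)) := by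
  apply Module.Projective.of_split (iDia k) (sDia k)
  apply LinearMap.ext
  intro v
  apply Subtype.ext
  funext p
  show (if (1 : Fin 3) = 1 then (v : V) p else 0) = (v : V) p
  rw [if_pos rfl]

end Aux

/-- Every nonzero `Γ`-submodule of `R³` equals `tⁿ·P̃_⋆` or
`tⁿ·P̃_⋄` for some `n ∈ ℕ`.  In particular the `Γ`-submodules of `R³` are totally
ordered by inclusion (`P̃_⋆`, and likewise `P̃_⋄`, is uniserial), and every nonzero
`Γ`-submodule of `R³` is isomorphic to `P̃_⋆` or `P̃_⋄`, hence projective. -/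
theorem heredOrder_uniserial :
    (∀ N : Submodule (↥(heredOrder k)) (Fin 3 → PowerSeries k), N ≠ ⊥ →
      ∃ n : ℕ,
        N = Submodule.map ((multX k) ^ n)
            (⊤ : Submodule (↥(heredOrder k)) (Fin 3 → PowerSeries k)) ∨
        N = Submodule.map ((multX k) ^ n) (Pdiamond k)) ∧
    (∀ N₁ N₂ : Submodule (↥(heredOrder k)) (Fin 3 → PowerSeries k), N₁ ≤ N₂ ∨ N₂ ≤ N₁) ∧
    (∀ N : Submodule (↥(heredOrder k)) (Fin 3 → PowerSeries k), N ≠ ⊥ →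
      (Nonempty ((↥N) ≃ₗ[↥(heredOrder k)] (Fin 3 → PowerSeries k)) ∨
        Nonempty ((↥N) ≃ₗ[↥(heredOrder k)] ↥(Pdiamond k))) ∧
      Module.Projective (↥(heredOrder k)) (↥N)) := by
  classical
  refine ⟨?_, ?_, ?_⟩
  · intro N hN
    obtain ⟨j, rfl⟩ := exists_eq_MM k N hN
    rcases Nat.even_or_odd j with ⟨n, hn⟩ | ⟨n, hn⟩
    · exact ⟨n, Or.inl (by rw [show j = 2*n from by omega, MM_even])⟩
    · exact ⟨n, Or.inr (by rw [show j = 2*n+1 from by omega, MM_odd])⟩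
  · intro N₁ N₂
    by_cases h1 : N₁ = ⊥
    · left; rw [h1]; exact bot_le
    by_cases h2 : N₂ = ⊥
    · right; rw [h2]; exact bot_le
    obtain ⟨j₁, rfl⟩ := exists_eq_MM k N₁ h1
    obtain ⟨j₂, rfl⟩ := exists_eq_MM k N₂ h2
    rcases le_total j₁ j₂ with h | h
    · right; exact MM_anti k h
    · left; exact MM_anti k h
  · intro N hN
    obtain ⟨j, rfl⟩ := exists_eq_MM k N hN
    rcases Nat.even_or_odd j with ⟨n, hn⟩ | ⟨n, hn⟩
    · have hj : j = 2*n := by omega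
      subst hj
      have hrange : LinearMap.range ((multX k) ^ n : Module.End (↥(heredOrder k)) (Fin 3 → PowerSeries k))
          = MM k (2*n) := by
        rw [← Submodule.map_top, ← MM_even]
      have e := (LinearEquiv.ofInjective
          ((multX k) ^ n : Module.End (↥(heredOrder k)) (Fin 3 → PowerSeries k))
          (multX_pow_injective k n)).trans (LinearEquiv.ofEq _ _ hrange)
      haveI := proj_star k
      exact ⟨Or.inl ⟨e.symm⟩, Module.Projective.of_equiv e⟩
    · subst hn
      have e := (Submodule.equivMapOfInjective
          ((multX k) ^ n : Module.End (↥(heredOrder k)) (Fin 3 → PowerSeries k))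
          (multX_pow_injective k n) (Pdiamond k)).trans
          (LinearEquiv.ofEq _ _ (MM_odd k n).symm)
      haveI := proj_dia k
      exact ⟨Or.inr ⟨e.symm⟩, Module.Projective.of_equiv e⟩
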